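/- arXiv:2201.08576 — 5 statements merged into one kernel-verified Lean document; each statement's English description precedes it below -/
import Mathlib

section
/- Let p be a point sphere complex and let s₁, s₂ be isotropic vectors with ⟨s₁,s₂⟩ ≠ 0, ⟨s₁,p⟩ ≠ 0 and ⟨s₂,p⟩ ≠ 0. Set a := ⟨s₂,p⟩s₁ − ⟨s₁,p⟩s₂. Then: (i) ⟨a,p⟩ = 0 and ⟨a,a⟩ = −2⟨s₁,p⟩⟨s₂,p⟩⟨s₁,s₂⟩ ≠ 0, so σ_a is an M-Lie inversion; (ii) σ_a(s₁) = (⟨s₁,p⟩/⟨s₂,p⟩)·s₂, i.e. σ_a maps the sphere s₁ onto the sphere s₂; (iii) every x ∈ ℝ^{4,2} with ⟨x,s₁⟩ = ⟨x,s₂⟩ = 0 (a sphere in oriented contact with s₁ and s₂) is fixed: σ_a(x) = x; (iv) every x ∈ ℝ^{4,2} with ⟨x, s₁ + ⟨s₁,p⟩p⟩ = 0 and ⟨x, s₂ + ⟨s₂,p⟩p⟩ = 0 (a sphere intersecting s₁ and s₂ orthogonally) is fixed: σ_a(x) = x. -/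
noncomputable section

/-- The symmetric bilinear form of signature (4,2) on ℝ⁶, modelling ℝ^{4,2}. -/
def B (x y : Fin 6 → ℝ) : ℝ :=
  x 0 * y 0 + x 1 * y 1 + x 2 * y 2 + x 3 * y 3 - x 4 * y 4 - x 5 * y 5

/-- The Lie inversion with respect to the linear sphere complex `a`. -/
def lieInv (a x : Fin 6 → ℝ) : Fin 6 → ℝ :=
  x - (2 * B x a / B a a) • a

lemma B_comm (x y : Fin 6 → ℝ) : B x y = B y x := by simp [B]; ring

lemma B_right (x : Fin 6 → ℝ) (c d : ℝ) (u v : Fin 6 → ℝ) :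
    B x (c • u - d • v) = c * B x u - d * B x v := by
  simp [B, Pi.sub_apply, Pi.smul_apply, smul_eq_mul]; ring

lemma B_add_right (x : Fin 6 → ℝ) (c : ℝ) (u v : Fin 6 → ℝ) :
    B x (u + c • v) = B x u + c * B x v := by
  simp [B, Pi.add_apply, Pi.smul_apply, smul_eq_mul]; ring

lemma B_left (c d : ℝ) (u v x : Fin 6 → ℝ) :
    B (c • u - d • v) x = c * B u x - d * B v x := by
  rw [B_comm, B_right, B_comm u, B_comm v]

/-- For a point sphere complex `p` and two spheres `s₁, s₂`
with `⟨s₁,s₂⟩, ⟨s₁,p⟩, ⟨s₂,p⟩ ≠ 0`, the vector `a = ⟨s₂,p⟩s₁ - ⟨s₁,p⟩s₂`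
defines an M-Lie inversion mapping `s₁` onto `s₂` and fixing every sphere in
oriented contact with, or orthogonal to, both `s₁` and `s₂`. -/
theorem stmt_1 (p s₁ s₂ : Fin 6 → ℝ) (hp : B p p = -1)
    (hs₁ : s₁ ≠ 0) (hs₂ : s₂ ≠ 0) (i₁ : B s₁ s₁ = 0) (i₂ : B s₂ s₂ = 0)
    (h12 : B s₁ s₂ ≠ 0) (h1p : B s₁ p ≠ 0) (h2p : B s₂ p ≠ 0)
    (a : Fin 6 → ℝ) (ha : a = B s₂ p • s₁ - B s₁ p • s₂) :
    B a p = 0 ∧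
    B a a = -2 * B s₁ p * B s₂ p * B s₁ s₂ ∧ B a a ≠ 0 ∧
    lieInv a s₁ = (B s₁ p / B s₂ p) • s₂ ∧
    (∀ x : Fin 6 → ℝ, B x s₁ = 0 → B x s₂ = 0 → lieInv a x = x) ∧
    (∀ x : Fin 6 → ℝ, B x (s₁ + B s₁ p • p) = 0 → B x (s₂ + B s₂ p • p) = 0 →
      lieInv a x = x) := by
  set c := B s₂ p with hc
  set d := B s₁ p with hd
  have hap : B a p = 0 := by rw [ha, B_left]; ring
  have haa : B a a = -2 * d * c * B s₁ s₂ := by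
    rw [ha, B_left, B_right, B_right, i₁, i₂, B_comm s₂ s₁]; ring
  have haa0 : B a a ≠ 0 := by
    rw [haa]; intro h
    rcases mul_eq_zero.1 h with h | h
    · rcases mul_eq_zero.1 h with h | h
      · rcases mul_eq_zero.1 h with h | h
        · norm_num at h
        · exact h1p h
      · exact h2p h
    · exact h12 h
  refine ⟨hap, haa, haa0, ?_, ?_, ?_⟩
  · have h1a : B s₁ a = -d * B s₁ s₂ := by rw [ha, B_right, i₁]; ring
    have : 2 * B s₁ a / B a a = 1 / c := by
      rw [h1a, haa]; field_simp
    rw [lieInv, this, ha]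
    funext i
    simp only [Pi.sub_apply, Pi.smul_apply, smul_eq_mul]
    field_simp
    ring
  · intro x hx1 hx2
    have hxa : B x a = 0 := by rw [ha, B_right, hx1, hx2]; ring
    rw [lieInv, hxa]; simp
  · intro x hx1 hx2
    rw [B_add_right] at hx1 hx2
    have hxa : B x a = 0 := by
      rw [ha, B_right]
      have e1 : B x s₁ = -(d * B x p) := by linarith
      have e2 : B x s₂ = -(c * B x p) := by linarith
      rw [e1, e2]; ring
    rw [lieInv, hxa]; simp
end
end

section
/- Let p be a point sphere complex and let s : ℝ → ℝ^{4,2} be a differentiable curve with ⟨s(t),s(t)⟩ = 0 and ⟨s(t),p⟩ = 1 for all t (a parametrized family of spheres), and let t₀ be such that ⟨s'(t₀),s'(t₀)⟩ > 0. Then for either choice of sign, the vector q := s'(t₀) ± √⟨s'(t₀),s'(t₀)⟩·p is a nonzero isotropic vector satisfying ⟨q, s(t₀) + ⟨s(t₀),p⟩p⟩ = 0; i.e. the two quer-spheres q^{±}(t₀) are oriented spheres that intersect the sphere s(t₀) orthogonally. -/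
noncomputable section

/-- For a differentiable family of spheres `t ↦ s(t)` with
`⟨s,s⟩ = 0`, `⟨s,p⟩ = 1` and `⟨s'(t₀),s'(t₀)⟩ > 0`, the quer-spheres
`q^± = s'(t₀) ± √⟨s'(t₀),s'(t₀)⟩ · p` are nonzero isotropic vectors
intersecting the sphere `s(t₀)` orthogonally. -/
theorem stmt_4 (p : Fin 6 → ℝ) (hp : B p p = -1)
    (s : ℝ → Fin 6 → ℝ) (hdiff : Differentiable ℝ s)
    (hiso : ∀ t, B (s t) (s t) = 0) (hnorm : ∀ t, B (s t) p = 1)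
    (t₀ : ℝ) (hpos : 0 < B (deriv s t₀) (deriv s t₀))
    (ε : ℝ) (hε : ε = 1 ∨ ε = -1)
    (q : Fin 6 → ℝ)
    (hq : q = deriv s t₀ + (ε * Real.sqrt (B (deriv s t₀) (deriv s t₀))) • p) :
    q ≠ 0 ∧ B q q = 0 ∧ B q (s t₀ + B (s t₀) p • p) = 0 := by
  set d := deriv s t₀ with hd
  have hds : HasDerivAt s d t₀ := (hdiff t₀).hasDerivAt
  have hi : ∀ i, HasDerivAt (fun t => s t i) (d i) t₀ := hasDerivAt_pi.mp hds
  -- derivative of B (s t) (s t) is 0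
  have hF : HasDerivAt (fun t => B (s t) (s t))
      ((d 0 * s t₀ 0 + s t₀ 0 * d 0 + (d 1 * s t₀ 1 + s t₀ 1 * d 1) +
        (d 2 * s t₀ 2 + s t₀ 2 * d 2) + (d 3 * s t₀ 3 + s t₀ 3 * d 3) -
        (d 4 * s t₀ 4 + s t₀ 4 * d 4)) - (d 5 * s t₀ 5 + s t₀ 5 * d 5)) t₀ := by
    simpa [B, Pi.add_def, Pi.sub_def, Pi.mul_def] using
      ((((((hi 0).mul (hi 0)).add ((hi 1).mul (hi 1))).add ((hi 2).mul (hi 2))).add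
        ((hi 3).mul (hi 3))).sub ((hi 4).mul (hi 4))).sub ((hi 5).mul (hi 5))
  have hFc : (fun t => B (s t) (s t)) = fun _ => (0:ℝ) := funext hiso
  rw [hFc] at hF
  have hBds : B d (s t₀) = 0 := by
    have h0 := (hasDerivAt_const t₀ (0:ℝ)).unique hF
    simp only [B]; linarith
  -- derivative of B (s t) p is 0
  have hG : HasDerivAt (fun t => B (s t) p)
      ((d 0 * p 0 + d 1 * p 1 + d 2 * p 2 + d 3 * p 3 - d 4 * p 4) - d 5 * p 5) t₀ := by
    simpa [B, Pi.add_def, Pi.sub_def, Pi.mul_def] using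
      ((((((hi 0).mul_const (p 0)).add ((hi 1).mul_const (p 1))).add
        ((hi 2).mul_const (p 2))).add ((hi 3).mul_const (p 3))).sub
        ((hi 4).mul_const (p 4))).sub ((hi 5).mul_const (p 5))
  have hGc : (fun t => B (s t) p) = fun _ => (1:ℝ) := funext hnorm
  rw [hGc] at hG
  have hBdp : B d p = 0 := by
    have h1 := (hasDerivAt_const t₀ (1:ℝ)).unique hG
    simp only [B]; linarith
  set c := ε * Real.sqrt (B d d) with hc
  have hε2 : ε * ε = 1 := by rcases hε with h | h <;> rw [h] <;> norm_num
  have hcc : c * c = B d d := by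
    rw [hc]
    have : Real.sqrt (B d d) * Real.sqrt (B d d) = B d d :=
      Real.mul_self_sqrt hpos.le
    nlinarith [this]
  have hcne : c ≠ 0 := by
    have hs : Real.sqrt (B d d) ≠ 0 := ne_of_gt (Real.sqrt_pos.mpr hpos)
    have hεne : ε ≠ 0 := by rcases hε with h | h <;> rw [h] <;> norm_num
    exact mul_ne_zero hεne hs
  have hqi : ∀ i, q i = d i + c * p i := by
    intro i; rw [hq]; simp [hc]
  simp only [B] at hBdp hBds hp hcc
  have h1 := hnorm t₀
  simp only [B] at h1
  refine ⟨?_, ?_, ?_⟩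
  · intro h0
    have hBqp : B q p = 0 := by simp [B, h0]
    rw [B] at hBqp
    simp only [hqi] at hBqp
    apply hcne
    linear_combination -hBqp + hBdp + c * hp
  · simp only [B, hqi]
    linear_combination -hcc + 2 * c * hBdp + c * c * hp
  · rw [hnorm t₀]
    simp only [B, hqi, Pi.add_apply, Pi.smul_apply, smul_eq_mul, one_mul]
    linear_combination hBds + hBdp + c * h1 + c * hp
end
end

section
/- Let p be a point sphere complex and ℝ^{4,2} = D₁ ⊕⊥ D₂ a Dupin cyclide. Let s₀, s ∈ D₁ be isotropic vectors with ⟨s₀,p⟩ ≠ 0, ⟨s,p⟩ ≠ 0 and ⟨s₀,s⟩ ≠ 0, and set a := ⟨s,p⟩s₀ − ⟨s₀,p⟩s. Then a ∈ D₁, ⟨a,p⟩ = 0 and ⟨a,a⟩ ≠ 0, so σ_a is an M-Lie inversion; moreover σ_a(s₀) = (⟨s₀,p⟩/⟨s,p⟩)·s, and σ_a fixes D₂ pointwise: σ_a(x) = x for every x ∈ D₂. In particular, the evolution map of a Dupin cyclide maps the base curvature sphere s₀ onto the curvature sphere s of the same family and fixes every curvature sphere of the other family. -/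
noncomputable section

/-- The induced form on the subspace `W` has signature (2,1) (it admits a
spanning pseudo-orthonormal triple of Gram matrix diag(1,1,-1)); in particular
`W` is 3-dimensional. -/
def SigTwoOne (W : Submodule ℝ (Fin 6 → ℝ)) : Prop :=
  ∃ u v w : Fin 6 → ℝ, Submodule.span ℝ ({u, v, w} : Set (Fin 6 → ℝ)) = W ∧
    B u u = 1 ∧ B v v = 1 ∧ B w w = -1 ∧ B u v = 0 ∧ B u w = 0 ∧ B v w = 0

/-- For a Dupin cyclide `ℝ^{4,2} = D₁ ⊕⊥ D₂` and regular
curvature spheres `s₀, s ∈ D₁` with `⟨s₀,s⟩ ≠ 0`, the vector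
`a = ⟨s,p⟩s₀ - ⟨s₀,p⟩s ∈ D₁` defines an M-Lie inversion mapping `s₀` onto `s`
and fixing every curvature sphere of the other family `D₂` pointwise. -/
theorem stmt_5 (p : Fin 6 → ℝ) (hp : B p p = -1)
    (D₁ D₂ : Submodule ℝ (Fin 6 → ℝ))
    (hdim₁ : Module.finrank ℝ D₁ = 3) (hdim₂ : Module.finrank ℝ D₂ = 3)
    (hsig₁ : SigTwoOne D₁) (hsig₂ : SigTwoOne D₂)
    (horth : ∀ x ∈ D₁, ∀ y ∈ D₂, B x y = 0)
    (hspan : D₁ ⊔ D₂ = ⊤)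
    (s₀ s : Fin 6 → ℝ) (hs₀D : s₀ ∈ D₁) (hsD : s ∈ D₁)
    (hs₀ : s₀ ≠ 0) (hs : s ≠ 0) (i₀ : B s₀ s₀ = 0) (i : B s s = 0)
    (h₀p : B s₀ p ≠ 0) (hsp : B s p ≠ 0) (h₀s : B s₀ s ≠ 0)
    (a : Fin 6 → ℝ) (ha : a = B s p • s₀ - B s₀ p • s) :
    a ∈ D₁ ∧ B a p = 0 ∧ B a a ≠ 0 ∧
    lieInv a s₀ = (B s₀ p / B s p) • s ∧
    (∀ x ∈ D₂, lieInv a x = x) := by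

  have haD : a ∈ D₁ := by
    rw [ha]
    exact Submodule.sub_mem _ (Submodule.smul_mem _ _ hs₀D) (Submodule.smul_mem _ _ hsD)
  have haa : B a a = -2 * B s p * B s₀ p * B s₀ s := by
    simp only [ha, B, Pi.sub_apply, Pi.smul_apply, smul_eq_mul] at i₀ i ⊢
    linear_combination (s 0 * p 0 + s 1 * p 1 + s 2 * p 2 + s 3 * p 3 - s 4 * p 4 - s 5 * p 5) ^ 2 * i₀ + (s₀ 0 * p 0 + s₀ 1 * p 1 + s₀ 2 * p 2 + s₀ 3 * p 3 - s₀ 4 * p 4 - s₀ 5 * p 5) ^ 2 * i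
  have hs₀a : B s₀ a = -(B s₀ p * B s₀ s) := by
    simp only [ha, B, Pi.sub_apply, Pi.smul_apply, smul_eq_mul] at i₀ ⊢
    linear_combination (s 0 * p 0 + s 1 * p 1 + s 2 * p 2 + s 3 * p 3 - s 4 * p 4 - s 5 * p 5) * i₀
  refine ⟨haD, ?_, ?_, ?_, ?_⟩
  · simp only [ha, B, Pi.sub_apply, Pi.smul_apply, smul_eq_mul]; ring
  · rw [haa]
    exact mul_ne_zero (mul_ne_zero (mul_ne_zero (by norm_num) hsp) h₀p) h₀s
  · simp only [lieInv, haa, hs₀a]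
    funext j
    simp only [ha, Pi.sub_apply, Pi.smul_apply, smul_eq_mul]
    field_simp
    ring
  · intro x hx
    have hxa : B x a = 0 := by
      have := horth a haD x hx
      simp only [B] at this ⊢
      linarith
    simp [lieInv, hxa]
end
end

section
/- Let p be a point sphere complex. Let q₀, q₁ be isotropic vectors with ⟨q₀,p⟩ ≠ 0 and q₁ ∉ span{q₀,p}, and set M := span{q₀,q₁,p} (an M-sphere pencil). Call an isotropic vector q ∈ M admissible if ⟨q,p⟩ ≠ 0 and ⟨q₀,q⟩ ≠ 0; for admissible q put a_q := ⟨q,p⟩q₀ − ⟨q₀,p⟩q, so ⟨a_q,a_q⟩ = −2⟨q,p⟩⟨q₀,p⟩⟨q₀,q⟩ ≠ 0 and the evolution map q ↦ σ_{a_q} is defined. Let s₀ be an isotropic vector with ⟨s₀, q₀ + ⟨q₀,p⟩p⟩ = 0 (a sphere orthogonal to q₀) and s₀ ∉ M. Then exactly one of the following holds: (i) ⟨s₀, v + ⟨v,p⟩p⟩ = 0 for every isotropic v ∈ M, in which case σ_{a_q}(s₀) = s₀ for every admissible q; or (ii) the 3-dimensional subspace W := span{s₀} + (M ∩ p^⊥)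 carries the induced form of signature (2,1) and σ_{a_q}(s₀) ∈ W for every admissible q, so that q ↦ σ_{a_q}(s₀) is a family of curvature spheres of the Dupin cyclide W ⊕⊥ W^⊥. -/
noncomputable section

lemma B_add_left (x y z : Fin 6 → ℝ) : B (x + y) z = B x z + B y z := by
  simp [B]; ring

lemma B_smul_left (c : ℝ) (x z : Fin 6 → ℝ) : B (c • x) z = c * B x z := by
  simp [B]; ring

/-- The orthogonal complement of a single vector with respect to `B`. -/
def perpVec (u : Fin 6 → ℝ) : Submodule ℝ (Fin 6 → ℝ) where
  carrier := {x | B x u = 0}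
  add_mem' := fun {a b} ha hb => by
    simp only [Set.mem_setOf_eq] at *
    rw [B_add_left, ha, hb, add_zero]
  zero_mem' := by simp [B]
  smul_mem' := fun c x hx => by
    simp only [Set.mem_setOf_eq] at *
    rw [B_smul_left, hx, mul_zero]

/- ######## auxiliary lemmas ######## -/

set_option maxHeartbeats 1600000

lemma B_add_right_s6 (x y z : Fin 6 → ℝ) : B x (y + z) = B x y + B x z := by
  simp only [B, Pi.add_apply]; ring

lemma B_smul_right (c : ℝ) (x y : Fin 6 → ℝ) : B x (c • y) = c * B x y := by
  simp only [B, Pi.smul_apply, smul_eq_mul]; ring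

lemma B_comb3_left (x y z t : Fin 6 → ℝ) (α β γ : ℝ) :
    B (α • x + β • y + γ • z) t = α * B x t + β * B y t + γ * B z t := by
  simp only [B, Pi.add_apply, Pi.smul_apply, smul_eq_mul]; ring

lemma B_comb3_right (x y z t : Fin 6 → ℝ) (α β γ : ℝ) :
    B t (α • x + β • y + γ • z) = α * B t x + β * B t y + γ * B t z := by
  simp only [B, Pi.add_apply, Pi.smul_apply, smul_eq_mul]; ring

lemma B_comb3 (x y z : Fin 6 → ℝ) (a1 a2 a3 b1 b2 b3 : ℝ) :
    B (a1 • x + a2 • y + a3 • z) (b1 • x + b2 • y + b3 • z) =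
      a1 * b1 * B x x + a2 * b2 * B y y + a3 * b3 * B z z
        + (a1 * b2 + a2 * b1) * B x y + (a1 * b3 + a3 * b1) * B x z
        + (a2 * b3 + a3 * b2) * B y z := by
  simp only [B, Pi.add_apply, Pi.smul_apply, smul_eq_mul]; ring

lemma B_expand2 (t s : ℝ) (x y z : Fin 6 → ℝ) :
    B (x + t • z) (y + s • z) =
      B x y + s * B x z + t * B z y + t * s * B z z := by
  simp only [B, Pi.add_apply, Pi.smul_apply, smul_eq_mul]; ring

lemma B_sub_comb (t s : ℝ) (x y : Fin 6 → ℝ) :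
    B (t • x - s • y) (t • x - s • y) =
      t * t * B x x - 2 * t * s * B x y + s * s * B y y := by
  simp only [B, Pi.sub_apply, Pi.smul_apply, smul_eq_mul]; ring

lemma B_sub_comb_right (t s : ℝ) (x y z : Fin 6 → ℝ) :
    B z (t • x - s • y) = t * B z x - s * B z y := by
  simp only [B, Pi.sub_apply, Pi.smul_apply, smul_eq_mul]; ring

lemma B_sub_comb_left (t s : ℝ) (x y z : Fin 6 → ℝ) :
    B (t • x - s • y) z = t * B x z - s * B y z := by
  simp only [B, Pi.sub_apply, Pi.smul_apply, smul_eq_mul]; ring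

lemma mem_span_triple' {x a b c : Fin 6 → ℝ}
    (h : x ∈ Submodule.span ℝ ({a, b, c} : Set (Fin 6 → ℝ))) :
    ∃ α β γ : ℝ, x = α • a + β • b + γ • c := by
  rw [Submodule.mem_span_insert] at h
  obtain ⟨α, z, hz, rfl⟩ := h
  rw [Submodule.mem_span_pair] at hz
  obtain ⟨β, γ, rfl⟩ := hz
  exact ⟨α, β, γ, by rw [add_assoc]⟩

lemma not_sig {W : Submodule ℝ (Fin 6 → ℝ)} {s : Fin 6 → ℝ}
    (hs : s ≠ 0) (hsW : s ∈ W) (h : ∀ t ∈ W, B s t = 0) : ¬ SigTwoOne W := by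
  rintro ⟨u, v, w, hspan, huu, hvv, hww, huv, huw, hvw⟩
  rw [← hspan] at hsW
  obtain ⟨α, β, γ, hx⟩ := mem_span_triple' hsW
  have hmem : ∀ t ∈ ({u, v, w} : Set (Fin 6 → ℝ)), t ∈ W := fun t ht =>
    hspan ▸ Submodule.subset_span ht
  have hu : B s u = 0 := h u (hmem u (by simp))
  have hv : B s v = 0 := h v (hmem v (by simp))
  have hw : B s w = 0 := h w (hmem w (by simp))
  rw [hx, B_comb3_left] at hu hv hw
  rw [huu, B_comm v u, huv, B_comm w u, huw] at hu
  rw [huv, hvv, B_comm w v, hvw] at hv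
  rw [huw, hvw, hww] at hw
  have hα : α = 0 := by linarith
  have hβ : β = 0 := by linarith
  have hγ : γ = 0 := by linarith
  exact hs (by rw [hx, hα, hβ, hγ]; simp)

lemma sig_construction (s e f : Fin 6 → ℝ) (a c : ℝ) (ha : a ≠ 0) (hc : c ≠ 0)
    (hss : B s s = 0) (hse : B s e = 0) (hsf : B s f = c)
    (hee : B e e = a * a) :
    ∃ u v w : Fin 6 → ℝ,
      Submodule.span ℝ ({u, v, w} : Set (Fin 6 → ℝ)) =
        Submodule.span ℝ ({s, e, f} : Set (Fin 6 → ℝ)) ∧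
      B u u = 1 ∧ B v v = 1 ∧ B w w = -1 ∧ B u v = 0 ∧ B u w = 0 ∧ B v w = 0 := by
  obtain ⟨r, hr⟩ : ∃ r : ℝ, r = B f f - B e f * B e f / (a * a) := ⟨_, rfl⟩
  refine ⟨(0:ℝ) • s + a⁻¹ • e + (0:ℝ) • f,
          ((1 - r) / (2 * c)) • s + (-(B e f / (a * a))) • e + (1:ℝ) • f,
          ((1 + r) / (2 * c)) • s + (B e f / (a * a)) • e + (-1:ℝ) • f,
          ?_, ?_, ?_, ?_, ?_, ?_, ?_⟩
  case _ =>
    set u := (0:ℝ) • s + a⁻¹ • e + (0:ℝ) • f with hu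
    set v := ((1 - r) / (2 * c)) • s + (-(B e f / (a * a))) • e + (1:ℝ) • f with hv
    set w := ((1 + r) / (2 * c)) • s + (B e f / (a * a)) • e + (-1:ℝ) • f with hw
    have hsS : s ∈ Submodule.span ℝ ({s, e, f} : Set (Fin 6 → ℝ)) :=
      Submodule.subset_span (by simp)
    have heS : e ∈ Submodule.span ℝ ({s, e, f} : Set (Fin 6 → ℝ)) :=
      Submodule.subset_span (by simp)
    have hfS : f ∈ Submodule.span ℝ ({s, e, f} : Set (Fin 6 → ℝ)) :=
      Submodule.subset_span (by simp)
    have huS : u ∈ Submodule.span ℝ ({u, v, w} : Set (Fin 6 → ℝ)) :=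
      Submodule.subset_span (by simp)
    have hvS : v ∈ Submodule.span ℝ ({u, v, w} : Set (Fin 6 → ℝ)) :=
      Submodule.subset_span (by simp)
    have hwS : w ∈ Submodule.span ℝ ({u, v, w} : Set (Fin 6 → ℝ)) :=
      Submodule.subset_span (by simp)
    apply le_antisymm
    · rw [Submodule.span_le]
      intro x hx
      simp only [Set.mem_insert_iff, Set.mem_singleton_iff] at hx
      rcases hx with rfl | rfl | rfl
      · exact add_mem (add_mem (Submodule.smul_mem _ _ hsS) (Submodule.smul_mem _ _ heS))
          (Submodule.smul_mem _ _ hfS)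
      · exact add_mem (add_mem (Submodule.smul_mem _ _ hsS) (Submodule.smul_mem _ _ heS))
          (Submodule.smul_mem _ _ hfS)
      · exact add_mem (add_mem (Submodule.smul_mem _ _ hsS) (Submodule.smul_mem _ _ heS))
          (Submodule.smul_mem _ _ hfS)
    · rw [Submodule.span_le]
      have hsmem : s ∈ Submodule.span ℝ ({u, v, w} : Set (Fin 6 → ℝ)) := by
        have hs' : s = c • v + c • w := by
          rw [hv, hw]; match_scalars <;> (field_simp <;> ring)
        rw [hs']
        exact add_mem (Submodule.smul_mem _ _ hvS) (Submodule.smul_mem _ _ hwS)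
      have hemem : e ∈ Submodule.span ℝ ({u, v, w} : Set (Fin 6 → ℝ)) := by
        have he' : e = a • u := by
          rw [hu]; match_scalars <;> (field_simp <;> ring)
        rw [he']
        exact Submodule.smul_mem _ _ huS
      have hfmem : f ∈ Submodule.span ℝ ({u, v, w} : Set (Fin 6 → ℝ)) := by
        have hf' : f = v + (-((1 - r) / (2 * c))) • s + (B e f / (a * a)) • e := by
          rw [hv]; match_scalars <;> ring
        rw [hf']
        exact add_mem (add_mem hvS (Submodule.smul_mem _ _ hsmem))
          (Submodule.smul_mem _ _ hemem)
      intro x hx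
      simp only [Set.mem_insert_iff, Set.mem_singleton_iff] at hx
      rcases hx with rfl | rfl | rfl
      · exact hsmem
      · exact hemem
      · exact hfmem
  all_goals
    rw [B_comb3, hss, hse, hsf, hee]
    try simp only [hr]
    field_simp
    try ring

/-- Evolving a sphere `s₀` orthogonal to `q₀` by the evolution
map associated to the M-sphere pencil `M = span{q₀,q₁,p}`: the evolution maps
`σ_{a_q}` are defined (`⟨a_q,a_q⟩ = -2⟨q,p⟩⟨q₀,p⟩⟨q₀,q⟩ ≠ 0`), and exactly one
of the following holds: either `s₀` is orthogonal to every sphere of the pencil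
and is fixed by all evolution maps, or the subspace
`W = span{s₀} + (M ∩ p^⊥)` carries signature (2,1) and contains all spheres
`σ_{a_q}(s₀)`, i.e. the evolution yields a curvature sphere family of the Dupin
cyclide `W ⊕⊥ W^⊥`. -/
theorem stmt_6 (p q₀ q₁ : Fin 6 → ℝ) (hp : B p p = -1)
    (hq₀ : q₀ ≠ 0) (iq₀ : B q₀ q₀ = 0) (hq₁ : q₁ ≠ 0) (iq₁ : B q₁ q₁ = 0)
    (hq₀p : B q₀ p ≠ 0)
    (hq₁M : q₁ ∉ Submodule.span ℝ ({q₀, p} : Set (Fin 6 → ℝ)))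
    (s₀ : Fin 6 → ℝ) (hs₀ : s₀ ≠ 0) (is₀ : B s₀ s₀ = 0)
    (horth : B s₀ (q₀ + B q₀ p • p) = 0)
    (M : Submodule ℝ (Fin 6 → ℝ))
    (hM : M = Submodule.span ℝ ({q₀, q₁, p} : Set (Fin 6 → ℝ)))
    (hs₀M : s₀ ∉ M)
    (W : Submodule ℝ (Fin 6 → ℝ))
    (hW : W = Submodule.span ℝ ({s₀} : Set (Fin 6 → ℝ)) ⊔ (M ⊓ perpVec p)) :
    (∀ q ∈ M, B q q = 0 → B q p ≠ 0 → B q₀ q ≠ 0 →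
      B (B q p • q₀ - B q₀ p • q) (B q p • q₀ - B q₀ p • q) =
          -2 * B q p * B q₀ p * B q₀ q ∧
        B (B q p • q₀ - B q₀ p • q) (B q p • q₀ - B q₀ p • q) ≠ 0) ∧
    Xor'
      ((∀ v ∈ M, B v v = 0 → v ≠ 0 → B s₀ (v + B v p • p) = 0) ∧
        (∀ q ∈ M, B q q = 0 → B q p ≠ 0 → B q₀ q ≠ 0 →
          lieInv (B q p • q₀ - B q₀ p • q) s₀ = s₀))
      (SigTwoOne W ∧
        (∀ q ∈ M, B q q = 0 → B q p ≠ 0 → B q₀ q ≠ 0 →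
          lieInv (B q p • q₀ - B q₀ p • q) s₀ ∈ W)) := by
  have hq₀M : q₀ ∈ M := by rw [hM]; exact Submodule.subset_span (by simp)
  have hq₁Mm : q₁ ∈ M := by rw [hM]; exact Submodule.subset_span (by simp)
  have hpM : p ∈ M := by rw [hM]; exact Submodule.subset_span (by simp)
  have horth' : B s₀ q₀ + B q₀ p * B s₀ p = 0 := by
    rwa [B_add_right_s6, B_smul_right] at horth
  have hrep : ∀ x ∈ M, ∃ α β γ : ℝ, x = α • q₀ + β • q₁ + γ • p := by
    intro x hx
    rw [hM] at hx
    exact mem_span_triple' hx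
  have hs₀W : s₀ ∈ W := by
    rw [hW]; exact Submodule.mem_sup_left (Submodule.subset_span (by simp))
  constructor
  · intro q hqM hqq hqp hq₀q
    have key : B (B q p • q₀ - B q₀ p • q) (B q p • q₀ - B q₀ p • q)
        = -2 * B q p * B q₀ p * B q₀ q := by
      rw [B_sub_comb, iq₀, hqq]; ring
    exact ⟨key, key ▸ mul_ne_zero (mul_ne_zero (mul_ne_zero (by norm_num) hqp) hq₀p) hq₀q⟩
  by_cases hc : B s₀ q₁ + B q₁ p * B s₀ p = 0
  · -- case (i)
    have L0 : ∀ v ∈ M, B s₀ v + B v p * B s₀ p = 0 := by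
      intro v hv
      obtain ⟨α, β, γ, rfl⟩ := hrep v hv
      rw [B_comb3_right, B_comb3_left, hp]
      linear_combination α * horth' + β * hc
    refine Or.inl ⟨⟨?_, ?_⟩, ?_⟩
    · intro v hv _ _
      rw [B_add_right_s6, B_smul_right]
      exact L0 v hv
    · intro q hqM hqq hqp hq₀q
      have hq : B s₀ q + B q p * B s₀ p = 0 := L0 q hqM
      have hz : B s₀ (B q p • q₀ - B q₀ p • q) = 0 := by
        rw [B_sub_comb_right]
        linear_combination B q p * horth' - B q₀ p * hq
      simp [lieInv, hz]
    · rintro ⟨hsig, -⟩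
      refine not_sig hs₀ hs₀W ?_ hsig
      intro t ht
      rw [hW, Submodule.mem_sup] at ht
      obtain ⟨y, hy, z, hz, rfl⟩ := ht
      rw [Submodule.mem_span_singleton] at hy
      obtain ⟨k, rfl⟩ := hy
      obtain ⟨hzM, hzp⟩ := Submodule.mem_inf.mp hz
      have hzp' : B z p = 0 := hzp
      have hL := L0 z hzM
      rw [hzp'] at hL
      rw [B_add_right_s6, B_smul_right, is₀]
      linarith
  · -- case (ii)
    obtain ⟨e₀, he₀⟩ : ∃ e₀, e₀ = q₀ + B q₀ p • p := ⟨_, rfl⟩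
    obtain ⟨e₁, he₁⟩ : ∃ e₁, e₁ = q₁ + B q₁ p • p := ⟨_, rfl⟩
    have hse : B s₀ e₀ = 0 := by rw [he₀]; exact horth
    have hsf : B s₀ e₁ = B s₀ q₁ + B q₁ p * B s₀ p := by
      rw [he₁, B_add_right_s6, B_smul_right]
    have hee : B e₀ e₀ = B q₀ p * B q₀ p := by
      rw [he₀, B_expand2, iq₀, hp, B_comm p q₀]; ring
    have hMperp : M ⊓ perpVec p = Submodule.span ℝ ({e₀, e₁} : Set (Fin 6 → ℝ)) := by
      apply le_antisymm
      · rintro x hx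
        obtain ⟨hxM, hxp⟩ := Submodule.mem_inf.mp hx
        have hxp' : B x p = 0 := hxp
        obtain ⟨α, β, γ, rfl⟩ := hrep x hxM
        rw [B_comb3_left, hp] at hxp'
        have hγ : γ = α * B q₀ p + β * B q₁ p := by linarith
        rw [Submodule.mem_span_pair]
        refine ⟨α, β, ?_⟩
        rw [he₀, he₁, hγ]
        match_scalars <;> ring
      · rw [Submodule.span_le]
        have h₀ : e₀ ∈ M ⊓ perpVec p := by
          refine Submodule.mem_inf.mpr ⟨?_, ?_⟩
          · rw [he₀]; exact add_mem hq₀M (Submodule.smul_mem _ _ hpM)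
          · show B e₀ p = 0
            rw [he₀, B_add_left, B_smul_left, hp]; ring
        have h₁ : e₁ ∈ M ⊓ perpVec p := by
          refine Submodule.mem_inf.mpr ⟨?_, ?_⟩
          · rw [he₁]; exact add_mem hq₁Mm (Submodule.smul_mem _ _ hpM)
          · show B e₁ p = 0
            rw [he₁, B_add_left, B_smul_left, hp]; ring
        intro x hx
        simp only [Set.mem_insert_iff, Set.mem_singleton_iff] at hx
        rcases hx with rfl | rfl
        exacts [h₀, h₁]
    have hW' : W = Submodule.span ℝ ({s₀, e₀, e₁} : Set (Fin 6 → ℝ)) := by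
      rw [hW, hMperp, ← Submodule.span_union, Set.singleton_union]
    obtain ⟨u, v, w, hspan, h1, h2, h3, h4, h5, h6⟩ :=
      sig_construction s₀ e₀ e₁ (B q₀ p) (B s₀ q₁ + B q₁ p * B s₀ p)
        hq₀p hc is₀ hse hsf hee
    refine Or.inr ⟨⟨⟨u, v, w, by rw [hspan, ← hW'], h1, h2, h3, h4, h5, h6⟩, ?_⟩, ?_⟩
    · intro q hqM hqq hqp hq₀q
      have haM : B q p • q₀ - B q₀ p • q ∈ M ⊓ perpVec p := by
        refine Submodule.mem_inf.mpr ⟨?_, ?_⟩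
        · exact sub_mem (Submodule.smul_mem _ _ hq₀M) (Submodule.smul_mem _ _ hqM)
        · show B (B q p • q₀ - B q₀ p • q) p = 0
          rw [B_sub_comb_left]; ring
      have haW : B q p • q₀ - B q₀ p • q ∈ W := by
        rw [hW]; exact Submodule.mem_sup_right haM
      show s₀ - _ • _ ∈ W
      exact sub_mem hs₀W (Submodule.smul_mem _ _ haW)
    · rintro ⟨h1', -⟩
      have hx := h1' q₁ hq₁Mm iq₁ hq₁
      rw [B_add_right_s6, B_smul_right] at hx
      exact hc hx
end
end

section
/- Let p be a point sphere complex, q₀, q₁ isotropic with ⟨q₀,p⟩ ≠ 0 and q₁ ∉ span{q₀,p}, and M := span{q₀,q₁,p}. For an admissible isotropic q ∈ M (meaning ⟨q,p⟩ ≠ 0 and ⟨q₀,q⟩ ≠ 0) set a_q := ⟨q,p⟩q₀ − ⟨q₀,p⟩q. Let m be a point sphere lying on the sphere q₀, i.e. m isotropic with ⟨m,p⟩ = 0 and ⟨m,q₀⟩ = 0. Then for every admissible q: (i) σ_{a_q}(m) is a point sphere: ⟨σ_{a_q}(m), p⟩ = 0; (ii) σ_{a_q}(m) lies on the sphere q: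 ⟨σ_{a_q}(m), q⟩ = 0; and (iii) all the vectors σ_{a_q}(m), for q ranging over the admissible spheres of the pencil, lie in the fixed subspace span({m} ∪ (M ∩ p^⊥)) of dimension at most 3, every element of which is orthogonal to p — i.e. the evolution of the point m traces a circle. -/
noncomputable section

lemma B_sub_smul_left (x a y : Fin 6 → ℝ) (c : ℝ) :
    B (x - c • a) y = B x y - c * B a y := by simp [B]; ring

lemma B_smul_sub_smul (s t : ℝ) (u v y : Fin 6 → ℝ) :
    B (s • u - t • v) y = s * B u y - t * B v y := by simp [B]; ring

lemma B_right_smul_sub_smul (s t : ℝ) (u v y : Fin 6 → ℝ) :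
    B y (s • u - t • v) = s * B y u - t * B y v := by simp [B]; ring


/-- Evolving a point sphere `m` lying on `q₀` by the evolution
map associated to the M-sphere pencil `M = span{q₀,q₁,p}`: for every admissible
`q`, `σ_{a_q}(m)` is a point sphere lying on `q`, and all images lie in the
fixed subspace `span({m} ∪ (M ∩ p^⊥))`, which has dimension at most 3 and is
orthogonal to `p` — i.e. the evolution of `m` traces a circle. -/
theorem stmt_7 (p q₀ q₁ : Fin 6 → ℝ) (hp : B p p = -1)
    (hq₀ : q₀ ≠ 0) (iq₀ : B q₀ q₀ = 0) (hq₁ : q₁ ≠ 0) (iq₁ : B q₁ q₁ = 0)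
    (hq₀p : B q₀ p ≠ 0)
    (hq₁M : q₁ ∉ Submodule.span ℝ ({q₀, p} : Set (Fin 6 → ℝ)))
    (m : Fin 6 → ℝ) (hm : m ≠ 0) (im : B m m = 0)
    (hmp : B m p = 0) (hmq₀ : B m q₀ = 0)
    (M : Submodule ℝ (Fin 6 → ℝ))
    (hM : M = Submodule.span ℝ ({q₀, q₁, p} : Set (Fin 6 → ℝ)))
    (W : Submodule ℝ (Fin 6 → ℝ))
    (hW : W = Submodule.span ℝ ({m} : Set (Fin 6 → ℝ)) ⊔ (M ⊓ perpVec p)) :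
    Module.finrank ℝ W ≤ 3 ∧ (∀ x ∈ W, B x p = 0) ∧
    ∀ q ∈ M, B q q = 0 → B q p ≠ 0 → B q₀ q ≠ 0 →
      B (lieInv (B q p • q₀ - B q₀ p • q) m) p = 0 ∧
      B (lieInv (B q p • q₀ - B q₀ p • q) m) q = 0 ∧
      lieInv (B q p • q₀ - B q₀ p • q) m ∈ W := by
  have hq₀M : q₀ ∈ M := by
    rw [hM]; exact Submodule.subset_span (by simp)
  have hpM : p ∈ M := by
    rw [hM]; exact Submodule.subset_span (by simp)
  -- dimension bound
  have hMle : Module.finrank ℝ M ≤ 3 := by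
    rw [hM]
    refine (finrank_span_le_card _).trans ?_
    simp only [Set.toFinset_insert, Set.toFinset_singleton]
    refine le_trans (Finset.card_insert_le _ _) ?_
    refine le_trans (Nat.add_le_add_right (Finset.card_insert_le _ _) 1) ?_
    simp
  have hpnotperp : p ∉ (perpVec p) := by
    intro h
    have : B p p = 0 := h
    rw [hp] at this; norm_num at this
  have hlt : M ⊓ perpVec p < M := by
    refine lt_of_le_of_ne inf_le_left (fun h => hpnotperp ?_)
    have : p ∈ M ⊓ perpVec p := h.symm ▸ hpM
    exact (Submodule.mem_inf.mp this).2
  have hinfle : Module.finrank ℝ ↥(M ⊓ perpVec p) ≤ 2 := by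
    have := Submodule.finrank_lt_finrank_of_lt hlt
    omega
  have hWle : Module.finrank ℝ W ≤ 3 := by
    rw [hW]
    refine (Submodule.finrank_add_le_finrank_add_finrank _ _).trans ?_
    have h1 : Module.finrank ℝ ↥(Submodule.span ℝ ({m} : Set (Fin 6 → ℝ))) = 1 :=
      finrank_span_singleton hm
    omega
  -- everything in W is orthogonal to p
  have hWperp : ∀ x ∈ W, B x p = 0 := by
    intro x hx
    rw [hW] at hx
    have : Submodule.span ℝ ({m} : Set (Fin 6 → ℝ)) ⊔ (M ⊓ perpVec p) ≤ perpVec p := by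
      refine sup_le ?_ inf_le_right
      rw [Submodule.span_le]
      intro y hy
      simp only [Set.mem_singleton_iff] at hy
      subst hy
      exact hmp
    exact this hx
  refine ⟨hWle, hWperp, ?_⟩
  intro q hqM iq hqp hq₀q
  set s := B q p with hs
  set t := B q₀ p with ht
  set a := s • q₀ - t • q with ha
  have hBap : B a p = 0 := by
    rw [ha, B_smul_sub_smul]; ring
  have hBma : B m a = -t * B m q := by
    rw [ha, B_right_smul_sub_smul, hmq₀]; ring
  have hBaa : B a a = -2 * s * t * B q₀ q := by
    rw [ha, B_smul_sub_smul, B_right_smul_sub_smul, B_right_smul_sub_smul, iq₀, iq,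
      B_comm q q₀]
    ring
  have hBaq : B a q = s * B q₀ q := by
    rw [ha, B_smul_sub_smul, iq]; ring
  have hBaa0 : B a a ≠ 0 := by
    rw [hBaa]
    exact mul_ne_zero (mul_ne_zero (mul_ne_zero (by norm_num) hqp) hq₀p) hq₀q
  refine ⟨?_, ?_, ?_⟩
  · rw [lieInv, B_sub_smul_left, hBap, hmp]; ring
  · rw [lieInv, B_sub_smul_left, hBma, hBaa, hBaq, B_comm m q]
    field_simp
    ring
  · rw [lieInv, hW]
    refine sub_mem ?_ ?_
    · exact Submodule.mem_sup_left (Submodule.mem_span_singleton_self m)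
    · refine Submodule.mem_sup_right (Submodule.smul_mem _ _ ?_)
      exact Submodule.mem_inf.mpr ⟨sub_mem (Submodule.smul_mem _ _ hq₀M) (Submodule.smul_mem _ _ hqM), hBap⟩
end
end
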